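/- Let F ⊂ ℤ^d be finite with 0 ∈ F, and let A ⊂ ℤ^d be such that 𝟙_F * 𝟙_A is ℓℤ^d-periodic for some ℓ ≥ 1. Let q be the least common multiple of ℓ and all primes ≤ 2|F|. Then there exist functions φ_f : ℤ^d → [0,1] for f ∈ F \ {0}, each ⟨qf⟩-periodic (i.e., φ_f(x + qf) = φ_f(x) for all x), such that 𝟙_A = 𝟙_F * 𝟙_A − Σ_{f ∈ F \ {0}} φ_f. -/

import Mathlib

open Finset

section Aux
variable {d : ℕ} (ℓ : ℕ) (A : Set (Fin d → ℤ))

noncomputable def aZ : (Fin d → ℤ) → ℤ := A.indicator 1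

lemma aZ01 (y : Fin d → ℤ) : aZ A y = 0 ∨ aZ A y = 1 := by
  classical
  by_cases h : y ∈ A
  · right; simp [aZ, h]
  · left; simp [aZ, h]

lemma aZ_nonneg (y : Fin d → ℤ) : 0 ≤ aZ A y := by
  rcases aZ01 A y with h | h <;> simp [h]

lemma aZ_le_one (y : Fin d → ℤ) : aZ A y ≤ 1 := by
  rcases aZ01 A y with h | h <;> simp [h]

noncomputable def Ss (F : Finset (Fin d → ℤ)) (r : ℕ) (x : Fin d → ℤ) : ℤ :=
  ∑ f ∈ F, aZ A (x - r • f)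

def Per (h : (Fin d → ℤ) → ℤ) : Prop := ∀ v x : Fin d → ℤ, h (x + ℓ • v) = h x

lemma sum_bounds {E : Finset (Fin d → ℤ)} (g : (Fin d → ℤ) → (Fin d → ℤ)) (x : Fin d → ℤ) :
    0 ≤ ∑ e ∈ E, aZ A (x - g e) ∧ ∑ e ∈ E, aZ A (x - g e) ≤ E.card := by
  constructor
  · exact Finset.sum_nonneg fun e _ => aZ_nonneg A _
  · calc ∑ e ∈ E, aZ A (x - g e) ≤ ∑ _e ∈ E, (1:ℤ) :=
          Finset.sum_le_sum fun e _ => aZ_le_one A _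
      _ = E.card := by simp

lemma primeStep (p : ℕ) (hp : p.Prime) (E : Finset (Fin d → ℤ)) (hcard : E.card < p)
    (hT : Per ℓ (fun x => ∑ e ∈ E, aZ A (x - e))) :
    Per ℓ (fun x => ∑ e ∈ E, aZ A (x - p • e)) := by
  classical
  haveI : Fact p.Prime := ⟨hp⟩
  set R := AddMonoidAlgebra (ZMod p) (Fin d → ℤ) with hRdef
  haveI : CharP R p := by
    refine charP_of_injective_algebraMap (R := ZMod p) ?_ p
    rw [AddMonoidAlgebra.coe_algebraMap]
    exact (AddMonoidAlgebra.single_right_injective (m := (0 : Fin d → ℤ))).comp (fun a b h => h)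
  -- evaluation pairing
  set Ev : ((Fin d → ℤ) → ZMod p) → (Fin d → ℤ) → R →+ ZMod p := fun h x =>
    (Finsupp.liftAddHom (fun y => AddMonoidHom.mulRight (h (x - y)))).comp
      AddMonoidAlgebra.coeffAddEquiv.toAddMonoidHom with hEv
  have Ev_single : ∀ h x y c, Ev h x (AddMonoidAlgebra.single y c) = c * h (x - y) := by
    intro h x y c
    exact Finsupp.liftAddHom_apply_single _ _ _
  set u : R := ∑ e ∈ E, AddMonoidAlgebra.single e (1 : ZMod p) with hu
  set aZp : (Fin d → ℤ) → ZMod p := fun y => ((aZ A y : ℤ) : ZMod p) with haZp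
  set Tp : (Fin d → ℤ) → ZMod p := fun x => ((∑ e ∈ E, aZ A (x - e) : ℤ) : ZMod p) with hTp
  have Tp_eq : ∀ x, Tp x = ∑ e ∈ E, aZp (x - e) := by
    intro x; simp [hTp, haZp]
  -- key exchange lemma
  have key : ∀ (x : Fin d → ℤ) (w : R), Ev aZp x (u * w) = Ev Tp x w := by
    intro x w
    induction w using AddMonoidAlgebra.induction with
    | zero => simp
    | single_add y c w hyw hc ih =>
      rw [mul_add, map_add, map_add, ih]
      congr 1
      have : u * AddMonoidAlgebra.single y c
          = ∑ e ∈ E, AddMonoidAlgebra.single (e + y) c := by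
        rw [hu, Finset.sum_mul]
        exact Finset.sum_congr rfl fun e _ => by
          rw [AddMonoidAlgebra.single_mul_single, one_mul]
      rw [this, map_sum, Ev_single]
      have : ∀ e ∈ E, Ev aZp x (AddMonoidAlgebra.single (e + y) c)
          = c * aZp (x - y - e) := by
        intro e _
        rw [Ev_single]
        congr 2
        abel
      rw [Finset.sum_congr rfl this, Tp_eq, Finset.mul_sum]
  have upow : u ^ p = ∑ e ∈ E, AddMonoidAlgebra.single (p • e) (1 : ZMod p) := by
    rw [hu, sum_pow_char]
    exact Finset.sum_congr rfl fun e _ => by rw [AddMonoidAlgebra.single_pow, one_pow]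
  have hps : u ^ p = u * u ^ (p - 1) := by
    rw [← pow_succ', Nat.sub_add_cancel hp.one_lt.le]
  have main : ∀ x, ((∑ e ∈ E, aZ A (x - p • e) : ℤ) : ZMod p) = Ev Tp x (u ^ (p - 1)) := by
    intro x
    have h1 : ((∑ e ∈ E, aZ A (x - p • e) : ℤ) : ZMod p) = Ev aZp x (u ^ p) := by
      rw [upow, map_sum]
      push_cast
      refine Finset.sum_congr rfl fun e _ => ?_
      rw [Ev_single, one_mul]
    rw [h1, hps, key]
  have TpPer : ∀ (v z : Fin d → ℤ), Tp (z + ℓ • v) = Tp z := by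
    intro v z
    have := hT v z
    simp only [hTp]
    exact_mod_cast congrArg (fun t : ℤ => (t : ZMod p)) this
  have EvPer : ∀ (w : R) (v x : Fin d → ℤ), Ev Tp (x + ℓ • v) w = Ev Tp x w := by
    intro w v x
    simp only [hEv, AddMonoidHom.comp_apply, AddEquiv.coe_toAddMonoidHom, Finsupp.liftAddHom_apply]
    refine Finsupp.sum_congr fun y _ => ?_
    simp only [AddMonoidHom.mulRight_apply]
    rw [show x + ℓ • v - y = (x - y) + ℓ • v by abel, TpPer]
  intro v x
  have c1 : ((∑ e ∈ E, aZ A (x + ℓ • v - p • e) : ℤ) : ZMod p)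
      = ((∑ e ∈ E, aZ A (x - p • e) : ℤ) : ZMod p) := by
    rw [main, main, EvPer]
  have hdvd : (p:ℤ) ∣ ((∑ e ∈ E, aZ A (x + ℓ • v - p • e)) - ∑ e ∈ E, aZ A (x - p • e)) := by
    rw [← ZMod.intCast_zmod_eq_zero_iff_dvd]
    push_cast
    rw [sub_eq_zero]
    exact_mod_cast c1
  have b1 := sum_bounds A (fun e => p • e) (x + ℓ • v) (E := E)
  have b2 := sum_bounds A (fun e => p • e) x (E := E)
  have habs : |(∑ e ∈ E, aZ A (x + ℓ • v - p • e)) - ∑ e ∈ E, aZ A (x - p • e)| < (p:ℤ) := by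
    rw [abs_sub_lt_iff]
    constructor
    · calc (∑ e ∈ E, aZ A (x + ℓ • v - p • e)) - ∑ e ∈ E, aZ A (x - p • e)
          ≤ (E.card : ℤ) - 0 := sub_le_sub b1.2 b2.1
      _ < p := by simpa using (by exact_mod_cast hcard : (E.card:ℤ) < p)
    · calc (∑ e ∈ E, aZ A (x - p • e)) - ∑ e ∈ E, aZ A (x + ℓ • v - p • e)
          ≤ (E.card : ℤ) - 0 := sub_le_sub b2.2 b1.1
      _ < p := by simpa using (by exact_mod_cast hcard : (E.card:ℤ) < p)
  have := Int.eq_zero_of_abs_lt_dvd hdvd habs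
  simpa [sub_eq_zero] using this

lemma smul_injective (s : ℕ) (hs : 1 ≤ s) :
    Function.Injective (fun f : Fin d → ℤ => s • f) := by
  intro f g h
  funext i
  have h1 := congrFun h i
  simp only [Pi.smul_apply, nsmul_eq_mul] at h1
  exact Int.eq_of_mul_eq_mul_left (by exact_mod_cast Nat.one_le_iff_ne_zero.mp hs) h1

lemma part1 (F : Finset (Fin d → ℤ)) (hF : Per ℓ (Ss A F 1)) :
    ∀ r : ℕ, 1 ≤ r → (∀ p, p.Prime → p ∣ r → F.card < p) → Per ℓ (Ss A F r) := by
  intro r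
  induction r using Nat.strong_induction_on with
  | _ r ih =>
    intro hr1 hfac
    rcases eq_or_lt_of_le hr1 with h1 | h2
    · rw [← h1]; exact hF
    · set p := r.minFac with hpdef
      have hp : p.Prime := Nat.minFac_prime (by omega)
      set s := r / p with hs
      have hsdvd : s ∣ r := Nat.div_dvd_of_dvd (Nat.minFac_dvd r)
      have hps : p * s = r := Nat.mul_div_cancel' (Nat.minFac_dvd r)
      have hslt : s < r := Nat.div_lt_self (by omega) hp.one_lt
      have hs1 : 1 ≤ s := Nat.pos_of_ne_zero (by intro h; rw [h] at hps; omega)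
      have ihs : Per ℓ (Ss A F s) := ih s hslt hs1 (fun q hq hqs => hfac q hq (hqs.trans hsdvd))
      set E := F.image (fun f => s • f) with hE
      have hinj : Set.InjOn (fun f : Fin d → ℤ => s • f) F :=
        fun a _ b _ h => smul_injective s hs1 h
      have hinj' : ∀ a ∈ F, ∀ b ∈ F, s • a = s • b → a = b :=
        fun a ha b hb h => smul_injective s hs1 h
      have hTE : Per ℓ (fun x => ∑ e ∈ E, aZ A (x - e)) := by
        intro v x
        show (∑ e ∈ E, aZ A (x + ℓ • v - e)) = ∑ e ∈ E, aZ A (x - e)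
        rw [hE, Finset.sum_image hinj', Finset.sum_image hinj']
        exact ihs v x
      have hcard : E.card < p := by
        rw [hE, Finset.card_image_of_injOn hinj]; exact hfac p hp (Nat.minFac_dvd r)
      have hmain := primeStep ℓ A p hp E hcard hTE
      intro v x
      have conv1 : ∀ z : Fin d → ℤ, (∑ e ∈ E, aZ A (z - p • e)) = Ss A F r z := by
        intro z
        rw [hE, Finset.sum_image hinj']
        refine Finset.sum_congr rfl fun f _ => ?_
        rw [smul_smul, hps]
      have := hmain v x
      simpa only [conv1] using this

lemma Ico_sdiff_card (a b c e : ℤ) :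
    (Finset.Ico a b \ Finset.Ico c e).card ≤ (c - a).toNat + (b - e).toNat := by
  have hsub : Finset.Ico a b \ Finset.Ico c e ⊆ Finset.Ico a c ∪ Finset.Ico e b := by
    intro z hz
    simp only [Finset.mem_sdiff, Finset.mem_Ico, Finset.mem_union, not_and, not_lt] at *
    omega
  calc (Finset.Ico a b \ Finset.Ico c e).card
      ≤ (Finset.Ico a c ∪ Finset.Ico e b).card := Finset.card_le_card hsub
    _ ≤ (Finset.Ico a c).card + (Finset.Ico e b).card := Finset.card_union_le _ _
    _ = (c - a).toNat + (b - e).toNat := by rw [Int.card_Ico, Int.card_Ico]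

lemma piFinset_sdiff_card_le (n : ℕ) (S T : Fin d → Finset ℤ) (c : Fin d → ℕ)
    (hS : ∀ i, (S i).card ≤ n) (hd : ∀ i, (S i \ T i).card ≤ c i) :
    ((Fintype.piFinset S) \ (Fintype.piFinset T)).card ≤ (∑ i, c i) * n ^ (d - 1) := by
  classical
  have hsub : (Fintype.piFinset S) \ (Fintype.piFinset T)
      ⊆ Finset.univ.biUnion
        (fun i => Fintype.piFinset (fun j => if j = i then S i \ T i else S j)) := by
    intro y hy
    rw [Finset.mem_sdiff] at hy
    obtain ⟨h1, h2⟩ := hy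
    rw [Fintype.mem_piFinset] at h1 h2
    push_neg at h2
    obtain ⟨i, hi⟩ := h2
    refine Finset.mem_biUnion.2 ⟨i, Finset.mem_univ i, ?_⟩
    rw [Fintype.mem_piFinset]
    intro j
    by_cases hj : j = i
    · subst hj
      rw [if_pos rfl]
      exact Finset.mem_sdiff.2 ⟨h1 j, hi⟩
    · simp only [if_neg hj]
      exact h1 j
  have hbad : ∀ i : Fin d,
      (Fintype.piFinset (fun j => if j = i then S i \ T i else S j)).card
        ≤ c i * n ^ (d - 1) := by
    intro i
    rw [Fintype.card_piFinset]
    rw [← Finset.mul_prod_erase Finset.univ _ (Finset.mem_univ i)]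
    have h1 : (if i = i then S i \ T i else S i).card ≤ c i := by
      simpa using hd i
    have h2 : (∏ j ∈ Finset.univ.erase i, (if j = i then S i \ T i else S j).card)
        ≤ n ^ (d - 1) := by
      calc (∏ j ∈ Finset.univ.erase i, (if j = i then S i \ T i else S j).card)
          ≤ ∏ _j ∈ Finset.univ.erase i, n := by
            refine Finset.prod_le_prod' fun j hj => ?_
            rw [if_neg (Finset.mem_erase.1 hj).1]
            exact hS j
        _ = n ^ (d - 1) := by
            rw [Finset.prod_const, Finset.card_erase_of_mem (Finset.mem_univ i),
              Finset.card_univ, Fintype.card_fin]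
    exact Nat.mul_le_mul h1 h2
  calc ((Fintype.piFinset S) \ (Fintype.piFinset T)).card
      ≤ (Finset.univ.biUnion
          (fun i => Fintype.piFinset (fun j => if j = i then S i \ T i else S j))).card :=
        Finset.card_le_card hsub
    _ ≤ ∑ i, (Fintype.piFinset (fun j => if j = i then S i \ T i else S j)).card :=
        Finset.card_biUnion_le
    _ ≤ ∑ i, c i * n ^ (d - 1) := Finset.sum_le_sum (fun i _ => hbad i)
    _ = (∑ i, c i) * n ^ (d - 1) := by rw [Finset.sum_mul]

lemma box_shift_bound (n : ℕ) (m : Fin d → ℤ) (b : (Fin d → ℤ) → ℤ)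
    (hb0 : ∀ y, 0 ≤ b y) (hb1 : ∀ y, b y ≤ 1) :
    |(∑ t ∈ Fintype.piFinset (fun _ : Fin d => Finset.Ico (0:ℤ) (n:ℤ)), b (t - m))
        - ∑ t ∈ Fintype.piFinset (fun _ : Fin d => Finset.Ico (0:ℤ) (n:ℤ)), b t|
      ≤ (((∑ i, 2 * (m i).natAbs) * n ^ (d - 1) : ℕ) : ℤ) := by
  classical
  set P : Finset (Fin d → ℤ) := Fintype.piFinset (fun _ : Fin d => Finset.Ico (0:ℤ) (n:ℤ))
    with hP
  set Q : Finset (Fin d → ℤ) := Fintype.piFinset (fun i => Finset.Ico (-(m i)) ((n:ℤ) - m i))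
    with hQ
  have hshift : (∑ t ∈ P, b (t - m)) = ∑ y ∈ Q, b y := by
    refine Finset.sum_nbij' (fun t => t - m) (fun y => y + m) ?_ ?_ ?_ ?_ ?_
    · intro t ht
      rw [hP, Fintype.mem_piFinset] at ht
      rw [hQ, Fintype.mem_piFinset]
      intro i
      have := ht i
      rw [Finset.mem_Ico] at *
      simp only [Pi.sub_apply]
      omega
    · intro y hy
      rw [hQ, Fintype.mem_piFinset] at hy
      rw [hP, Fintype.mem_piFinset]
      intro i
      have := hy i
      rw [Finset.mem_Ico] at *
      simp only [Pi.add_apply]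
      omega
    · intro t _; exact sub_add_cancel t m
    · intro y _; exact add_sub_cancel_right y m
    · intro t _; rfl
  have hQP : (Q \ P).card ≤ (∑ i, (m i).natAbs) * n ^ (d - 1) := by
    refine piFinset_sdiff_card_le n _ _ _ ?_ ?_
    · intro i; rw [Int.card_Ico]; omega
    · intro i
      calc (Finset.Ico (-(m i)) ((n:ℤ) - m i) \ Finset.Ico (0:ℤ) (n:ℤ)).card
          ≤ ((0:ℤ) - (-(m i))).toNat + (((n:ℤ) - m i) - n).toNat := Ico_sdiff_card _ _ _ _
        _ = (m i).natAbs := by omega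
  have hPQ : (P \ Q).card ≤ (∑ i, (m i).natAbs) * n ^ (d - 1) := by
    refine piFinset_sdiff_card_le n _ _ _ ?_ ?_
    · intro i; rw [Int.card_Ico]; omega
    · intro i
      calc (Finset.Ico (0:ℤ) (n:ℤ) \ Finset.Ico (-(m i)) ((n:ℤ) - m i)).card
          ≤ ((-(m i)) - 0).toNat + ((n:ℤ) - ((n:ℤ) - m i)).toNat := Ico_sdiff_card _ _ _ _
        _ = (m i).natAbs := by omega
  have e1 := Finset.sum_inter_add_sum_sdiff Q P b
  have e2 := Finset.sum_inter_add_sum_sdiff P Q b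
  have hrw : (∑ y ∈ Q, b y) - ∑ t ∈ P, b t = (∑ y ∈ Q \ P, b y) - ∑ t ∈ P \ Q, b t := by
    rw [Finset.inter_comm] at e1
    omega
  have habs1 : (∑ y ∈ Q \ P, b y) ≤ ((Q \ P).card : ℤ) := by
    calc (∑ y ∈ Q \ P, b y) ≤ ∑ _y ∈ Q \ P, (1:ℤ) := Finset.sum_le_sum fun y _ => hb1 y
      _ = ((Q \ P).card : ℤ) := by simp
  have habs1' : (0:ℤ) ≤ ∑ y ∈ Q \ P, b y := Finset.sum_nonneg fun y _ => hb0 y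
  have habs2 : (∑ y ∈ P \ Q, b y) ≤ ((P \ Q).card : ℤ) := by
    calc (∑ y ∈ P \ Q, b y) ≤ ∑ _y ∈ P \ Q, (1:ℤ) := Finset.sum_le_sum fun y _ => hb1 y
      _ = ((P \ Q).card : ℤ) := by simp
  have habs2' : (0:ℤ) ≤ ∑ y ∈ P \ Q, b y := Finset.sum_nonneg fun y _ => hb0 y
  rw [hshift, hrw]
  rw [abs_le]
  have hcast1 : ((Q \ P).card : ℤ) ≤ ((∑ i, (m i).natAbs) * n ^ (d - 1) : ℕ) := by
    exact_mod_cast hQP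
  have hcast2 : ((P \ Q).card : ℤ) ≤ ((∑ i, (m i).natAbs) * n ^ (d - 1) : ℕ) := by
    exact_mod_cast hPQ
  have hfinal : (((∑ i, (m i).natAbs) * n ^ (d - 1) : ℕ) : ℤ) * 2
      = (((∑ i, 2 * (m i).natAbs) * n ^ (d - 1) : ℕ) : ℤ) := by
    have h2 : (∑ i, 2 * (m i).natAbs) = 2 * ∑ i, (m i).natAbs := by
      rw [Finset.mul_sum]
    rw [h2]
    push_cast
    ring
  constructor
  · linarith
  · linarith

lemma part2 (F : Finset (Fin d → ℤ)) (hF1 : Per ℓ (Ss A F 1)) (r : ℕ) (hr1 : 1 ≤ r)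
    (hrper : Per ℓ (Ss A F r)) (hmod : ℓ ∣ r - 1) :
    ∀ x, Ss A F r x = Ss A F 1 x := by
  intro g₀
  obtain ⟨e, he⟩ := hmod
  have hre : r = 1 + ℓ * e := by omega
  set D : (Fin d → ℤ) → ℤ := fun x => Ss A F r x - Ss A F 1 x with hD
  have hDper : ∀ v z : Fin d → ℤ, D (z + ℓ • v) = D z := by
    intro v z
    simp only [hD]
    rw [hrper v z, hF1 v z]
  set K : ℕ := ∑ f ∈ F, ∑ i, 2 * ((e • f) i).natAbs with hK
  have key : ∀ n : ℕ, (n:ℤ)^d * |D g₀| ≤ (K * n ^ (d-1) : ℕ) := by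
    intro n
    set P : Finset (Fin d → ℤ) := Fintype.piFinset (fun _ : Fin d => Finset.Ico (0:ℤ) (n:ℤ))
      with hP
    have hconst : (∑ t ∈ P, D (g₀ + ℓ • t)) = (n:ℤ)^d * D g₀ := by
      have : ∀ t ∈ P, D (g₀ + ℓ • t) = D g₀ := fun t _ => hDper t g₀
      rw [Finset.sum_congr rfl this, Finset.sum_const, hP, Fintype.card_piFinset]
      simp [Int.card_Ico, mul_comm]
    have hsplit : (∑ t ∈ P, D (g₀ + ℓ • t))
        = ∑ f ∈ F, ((∑ t ∈ P, aZ A ((g₀ - f) + ℓ • (t - e • f)))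
            - ∑ t ∈ P, aZ A ((g₀ - f) + ℓ • t)) := by
      have hterm : ∀ t : Fin d → ℤ, D (g₀ + ℓ • t)
          = ∑ f ∈ F, (aZ A ((g₀ - f) + ℓ • (t - e • f)) - aZ A ((g₀ - f) + ℓ • t)) := by
        intro t
        simp only [hD, Ss]
        rw [← Finset.sum_sub_distrib]
        refine Finset.sum_congr rfl fun f _ => ?_
        congr 2
        · rw [smul_sub, smul_smul]
          rw [hre]
          rw [add_smul, one_smul]
          abel
        · rw [one_smul]
          abel
      rw [Finset.sum_congr rfl (fun t _ => hterm t), Finset.sum_comm]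
      refine Finset.sum_congr rfl fun f _ => ?_
      rw [Finset.sum_sub_distrib]
    have hbound : |∑ t ∈ P, D (g₀ + ℓ • t)| ≤ (K * n ^ (d-1) : ℕ) := by
      rw [hsplit]
      calc |∑ f ∈ F, ((∑ t ∈ P, aZ A ((g₀ - f) + ℓ • (t - e • f)))
            - ∑ t ∈ P, aZ A ((g₀ - f) + ℓ • t))|
          ≤ ∑ f ∈ F, |(∑ t ∈ P, aZ A ((g₀ - f) + ℓ • (t - e • f)))
            - ∑ t ∈ P, aZ A ((g₀ - f) + ℓ • t)| := Finset.abs_sum_le_sum_abs _ _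
        _ ≤ ∑ f ∈ F, (((∑ i, 2 * ((e • f) i).natAbs) * n ^ (d-1) : ℕ) : ℤ) := by
            refine Finset.sum_le_sum fun f _ => ?_
            have hb := box_shift_bound n (e • f) (fun t => aZ A ((g₀ - f) + ℓ • t))
              (fun y => aZ_nonneg A _) (fun y => aZ_le_one A _)
            simpa using hb
        _ = (K * n ^ (d-1) : ℕ) := by
            rw [hK]
            push_cast
            rw [Finset.sum_mul]
    have h1 : (n:ℤ)^d * |D g₀| = |(n:ℤ)^d * D g₀| := by
      rw [abs_mul, abs_pow, Int.abs_natCast]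
    rw [h1, ← hconst]
    exact hbound
  have hD0 : D g₀ = 0 := by
    by_contra hne
    have habs1 : (1:ℤ) ≤ |D g₀| := Int.one_le_abs hne
    have hk := key (K + 1)
    have h2 : (((K+1:ℕ)):ℤ)^d ≤ ((K * (K+1) ^ (d-1) : ℕ) : ℤ) := by
      calc (((K+1:ℕ)):ℤ)^d = (((K+1:ℕ)):ℤ)^d * 1 := by ring
        _ ≤ (((K+1:ℕ)):ℤ)^d * |D g₀| :=
            mul_le_mul_of_nonneg_left habs1 (by positivity)
        _ ≤ _ := hk
    have h3 : (K+1)^d ≤ K * (K+1)^(d-1) := by exact_mod_cast h2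
    cases d with
    | zero =>
        have hK0 : K = 0 := by
          rw [hK]
          refine Finset.sum_eq_zero fun f _ => ?_
          simp
        rw [hK0] at h3
        simp at h3
    | succ d' =>
        have hpos : 0 < (K+1)^d' := pow_pos (Nat.succ_pos K) d'
        rw [pow_succ, Nat.succ_sub_one] at h3
        nlinarith
  have := hD0
  simp only [hD] at this
  linarith

end Aux

section Mean
open Filter Topology

noncomputable def UF : Ultrafilter ℕ := Ultrafilter.of Filter.atTop

lemma UF_le : (UF : Filter ℕ) ≤ Filter.atTop := Ultrafilter.of_le _

noncomputable def ces (b : ℕ → ℝ) (N : ℕ) : ℝ := (∑ k ∈ Finset.range N, b k) / N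

def BddSeq (b : ℕ → ℝ) : Prop := ∃ M : ℝ, ∀ k, |b k| ≤ M

open Classical in
noncomputable def mean (b : ℕ → ℝ) : ℝ :=
  if h : ∃ l, Filter.Tendsto (ces b) (UF : Filter ℕ) (nhds l) then h.choose else 0

lemma ces_abs_le {b : ℕ → ℝ} {M : ℝ} (hM : ∀ k, |b k| ≤ M) (N : ℕ) : |ces b N| ≤ M := by
  have hM0 : 0 ≤ M := le_trans (abs_nonneg _) (hM 0)
  rcases Nat.eq_zero_or_pos N with h | h
  · subst h; simp [ces]; exact hM0
  · rw [ces, abs_div]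
    rw [div_le_iff₀ (by positivity : (0:ℝ) < |(N:ℝ)|)]
    calc |∑ k ∈ Finset.range N, b k| ≤ ∑ k ∈ Finset.range N, |b k| :=
          Finset.abs_sum_le_sum_abs _ _
      _ ≤ ∑ _k ∈ Finset.range N, M := Finset.sum_le_sum fun k _ => hM k
      _ = N * M := by simp [mul_comm]
      _ ≤ M * |(N:ℝ)| := by
          rw [abs_of_nonneg (by positivity : (0:ℝ) ≤ (N:ℝ))]
          ring_nf
          exact le_refl _

lemma mean_spec {b : ℕ → ℝ} (hb : BddSeq b) :
    Filter.Tendsto (ces b) (UF : Filter ℕ) (nhds (mean b)) := by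
  obtain ⟨M, hM⟩ := hb
  have hex : ∃ l, Filter.Tendsto (ces b) (UF : Filter ℕ) (nhds l) := by
    have hmem : ∀ N, ces b N ∈ Set.Icc (-M) M := fun N => abs_le.1 (ces_abs_le hM N)
    have hle : (↑(UF.map (ces b)) : Filter ℝ) ≤ Filter.principal (Set.Icc (-M) M) := by
      rw [Ultrafilter.coe_map, Filter.le_principal_iff, Filter.mem_map]
      exact Filter.univ_mem' hmem
    obtain ⟨l, _, hle2⟩ :=
      (isCompact_Icc (a := -M) (b := M)).ultrafilter_le_nhds (UF.map (ces b)) hle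
    refine ⟨l, ?_⟩
    rwa [Ultrafilter.coe_map] at hle2
  classical
  rw [mean, dif_pos hex]
  exact hex.choose_spec

lemma mean_unique {b : ℕ → ℝ} {l : ℝ} (hb : BddSeq b)
    (h : Filter.Tendsto (ces b) (UF : Filter ℕ) (nhds l)) : mean b = l :=
  tendsto_nhds_unique (mean_spec hb) h

lemma BddSeq.const (c : ℝ) : BddSeq (fun _ => c) := ⟨|c|, fun _ => le_refl _⟩

lemma mean_const (c : ℝ) : mean (fun _ => c) = c := by
  refine mean_unique (BddSeq.const c) ?_
  have h1 : ∀ N ≥ 1, ces (fun _ => c) N = c := by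
    intro N hN
    have hN0 : (N:ℝ) ≠ 0 := Nat.cast_ne_zero.mpr (by omega)
    rw [ces, Finset.sum_const, Finset.card_range, nsmul_eq_mul, mul_comm, mul_div_assoc,
      div_self hN0, mul_one]
  refine Filter.Tendsto.congr' ?_
    (tendsto_const_nhds : Filter.Tendsto (fun _ : ℕ => c) (UF : Filter ℕ) (nhds c))
  have : {N : ℕ | 1 ≤ N} ∈ (UF : Filter ℕ) := UF_le (Filter.mem_atTop 1)
  filter_upwards [this] with N hN
  exact (h1 N hN).symm

lemma BddSeq.add {b c : ℕ → ℝ} (hb : BddSeq b) (hc : BddSeq c) :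
    BddSeq (fun k => b k + c k) := by
  obtain ⟨M1, h1⟩ := hb
  obtain ⟨M2, h2⟩ := hc
  exact ⟨M1 + M2, fun k => (abs_add_le _ _).trans (add_le_add (h1 k) (h2 k))⟩

lemma mean_add {b c : ℕ → ℝ} (hb : BddSeq b) (hc : BddSeq c) :
    mean (fun k => b k + c k) = mean b + mean c := by
  refine mean_unique (hb.add hc) ?_
  have heq : ∀ N, ces (fun k => b k + c k) N = ces b N + ces c N := by
    intro N
    rw [ces, ces, ces, ← add_div, Finset.sum_add_distrib]
  refine Filter.Tendsto.congr (fun N => (heq N).symm) ?_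
  exact (mean_spec hb).add (mean_spec hc)

lemma mean_shift {b : ℕ → ℝ} (hb : BddSeq b) : mean (fun k => b (k + 1)) = mean b := by
  obtain ⟨M, hM⟩ := hb
  refine mean_unique ⟨M, fun k => hM (k+1)⟩ ?_
  have heq : ∀ N, ces (fun k => b (k + 1)) N = ces b N + (b N - b 0) / N := by
    intro N
    rcases Nat.eq_zero_or_pos N with h | h
    · subst h; simp [ces]
    · rw [ces, ces]
      have h2 := Finset.sum_range_succ' b N
      have h3 := Finset.sum_range_succ b N
      have h1 : (∑ k ∈ Finset.range N, b (k + 1))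
          = (∑ k ∈ Finset.range N, b k) + (b N - b 0) := by linarith
      rw [h1, add_div]
  have hdiff : Filter.Tendsto (fun N : ℕ => (b N - b 0) / N) Filter.atTop (nhds 0) := by
    have hbound : ∀ N : ℕ, ‖(b N - b 0) / N‖ ≤ (M + M) / N := by
      intro N
      rcases Nat.eq_zero_or_pos N with h | h
      · subst h
        simp
      · rw [Real.norm_eq_abs, abs_div, abs_of_nonneg (by positivity : (0:ℝ) ≤ (N:ℝ))]
        have hnum : |b N - b 0| ≤ M + M := by
          calc |b N - b 0| = |b N + -(b 0)| := by rw [sub_eq_add_neg]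
            _ ≤ |b N| + |-(b 0)| := abs_add_le _ _
            _ = |b N| + |b 0| := by rw [abs_neg]
            _ ≤ M + M := add_le_add (hM N) (hM 0)
        gcongr
    exact squeeze_zero_norm hbound (tendsto_const_div_atTop_nhds_zero_nat (M + M))
  have hmain : Filter.Tendsto (fun N => ces b N + (b N - b 0) / N) (UF : Filter ℕ)
      (nhds (mean b + 0)) :=
    (mean_spec ⟨M, hM⟩).add (hdiff.mono_left UF_le)
  rw [add_zero] at hmain
  exact Filter.Tendsto.congr (fun N => (heq N).symm) hmain

lemma mean_mem_Icc {b : ℕ → ℝ} (hb : ∀ k, b k ∈ Set.Icc (0:ℝ) 1) :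
    mean b ∈ Set.Icc (0:ℝ) 1 := by
  have hBdd : BddSeq b := ⟨1, fun k => by
    rw [abs_of_nonneg (hb k).1]; exact (hb k).2⟩
  have hmem : ∀ N, ces b N ∈ Set.Icc (0:ℝ) 1 := by
    intro N
    rcases Nat.eq_zero_or_pos N with h | h
    · subst h; simp [ces]
    · constructor
      · have h0 : (0:ℝ) ≤ ∑ k ∈ Finset.range N, b k :=
          Finset.sum_nonneg fun k _ => (hb k).1
        rw [ces]
        exact div_nonneg h0 (by positivity)
      · rw [ces, div_le_one (by exact_mod_cast h)]
        calc (∑ k ∈ Finset.range N, b k) ≤ ∑ _k ∈ Finset.range N, (1:ℝ) :=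
              Finset.sum_le_sum fun k _ => (hb k).2
          _ = N := by simp
  exact isClosed_Icc.mem_of_tendsto (mean_spec hBdd) (Filter.Eventually.of_forall hmem)

lemma BddSeq.finsum {ι : Type*} (s : Finset ι) (g : ι → ℕ → ℝ)
    (hg : ∀ i ∈ s, BddSeq (g i)) : BddSeq (fun k => ∑ i ∈ s, g i k) := by
  classical
  induction s using Finset.induction_on with
  | empty => simpa using BddSeq.const 0
  | insert a t hnotmem ih =>
    have h1 : BddSeq (g a) := hg a (Finset.mem_insert_self a t)
    have h2 : BddSeq (fun k => ∑ i ∈ t, g i k) :=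
      ih fun i hi => hg i (Finset.mem_insert_of_mem hi)
    have := h1.add h2
    refine ⟨this.choose, fun k => ?_⟩
    have hk := this.choose_spec k
    simpa [Finset.sum_insert hnotmem] using hk

lemma mean_finset_sum {ι : Type*} (s : Finset ι) (g : ι → ℕ → ℝ)
    (hg : ∀ i ∈ s, BddSeq (g i)) :
    mean (fun k => ∑ i ∈ s, g i k) = ∑ i ∈ s, mean (g i) := by
  classical
  induction s using Finset.induction_on with
  | empty => simpa using mean_const 0
  | insert a t hnotmem ih =>
    have h1 : BddSeq (g a) := hg a (Finset.mem_insert_self a t)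
    have h2 : BddSeq (fun k => ∑ i ∈ t, g i k) :=
      BddSeq.finsum t g fun i hi => hg i (Finset.mem_insert_of_mem hi)
    have key : mean (fun k => g a k + ∑ i ∈ t, g i k)
        = mean (g a) + mean (fun k => ∑ i ∈ t, g i k) := mean_add h1 h2
    have hrw : (fun k => ∑ i ∈ insert a t, g i k)
        = (fun k => g a k + ∑ i ∈ t, g i k) := by
      funext k
      rw [Finset.sum_insert hnotmem]
    rw [hrw, key, ih fun i hi => hg i (Finset.mem_insert_of_mem hi),
      Finset.sum_insert hnotmem]

end Mean

theorem stmt_6 (d : ℕ) (F : Finset (Fin d → ℤ)) (h0 : (0 : Fin d → ℤ) ∈ F)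
    (A : Set (Fin d → ℤ)) (ℓ : ℕ) (hℓ : 1 ≤ ℓ)
    (hper : ∀ v : Fin d → ℤ, ∀ x : Fin d → ℤ,
      ∑ f ∈ F, A.indicator (1 : (Fin d → ℤ) → ℝ) (x + ℓ • v - f)
        = ∑ f ∈ F, A.indicator (1 : (Fin d → ℤ) → ℝ) (x - f))
    (q : ℕ) (hq : q = Nat.lcm ℓ (∏ p ∈ (Finset.range (2 * F.card + 1)).filter Nat.Prime, p)) :
    ∃ φ : (Fin d → ℤ) → (Fin d → ℤ) → ℝ,
      (∀ f ∈ F.erase 0, ∀ x : Fin d → ℤ,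
        φ f x ∈ Set.Icc (0 : ℝ) 1 ∧ φ f (x + q • f) = φ f x) ∧
      (∀ x : Fin d → ℤ,
        A.indicator (1 : (Fin d → ℤ) → ℝ) x
          = ∑ f ∈ F, A.indicator (1 : (Fin d → ℤ) → ℝ) (x - f) - ∑ f ∈ F.erase 0, φ f x) := by
  classical
  set aR : (Fin d → ℤ) → ℝ := A.indicator 1 with haR
  have haRZ : ∀ y, aR y = ((aZ A y : ℤ) : ℝ) := by
    intro y; by_cases h : y ∈ A <;> simp [haR, aZ, h]
  have haR01 : ∀ y, aR y ∈ Set.Icc (0:ℝ) 1 := by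
    intro y; by_cases h : y ∈ A <;> simp [haR, h]
  have hBddaR : ∀ g : ℕ → (Fin d → ℤ), BddSeq (fun k => aR (g k)) := by
    intro g
    refine ⟨1, fun k => ?_⟩
    rw [abs_of_nonneg (haR01 (g k)).1]
    exact (haR01 (g k)).2
  have hcast1 : ∀ z : Fin d → ℤ, (∑ f ∈ F, aR (z - f)) = ((Ss A F 1 z : ℤ) : ℝ) := by
    intro z
    rw [Ss]
    push_cast
    refine Finset.sum_congr rfl fun f _ => ?_
    rw [haRZ, one_smul]
  have hcastr : ∀ (r : ℕ) (z : Fin d → ℤ),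
      (∑ f ∈ F, aR (z - r • f)) = ((Ss A F r z : ℤ) : ℝ) := by
    intro r z
    rw [Ss]
    push_cast
    refine Finset.sum_congr rfl fun f _ => ?_
    rw [haRZ]
  have hF1 : Per ℓ (Ss A F 1) := by
    intro v x
    have h1 := hper v x
    have h2 : ((Ss A F 1 (x + ℓ • v) : ℤ) : ℝ) = ((Ss A F 1 x : ℤ) : ℝ) := by
      rw [← hcast1, ← hcast1]
      exact h1
    exact_mod_cast h2
  have hℓq : ℓ ∣ q := hq ▸ Nat.dvd_lcm_left _ _
  have hprimes : ∀ p : ℕ, p.Prime → p ≤ 2 * F.card → p ∣ q := by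
    intro p hp hle
    rw [hq]
    refine dvd_trans ?_ (Nat.dvd_lcm_right _ _)
    refine Finset.dvd_prod_of_mem _ ?_
    rw [Finset.mem_filter, Finset.mem_range]
    exact ⟨by omega, hp⟩
  have hdil : ∀ k : ℕ, ∀ x, Ss A F (1 + k * q) x = Ss A F 1 x := by
    intro k
    have hr1 : 1 ≤ 1 + k * q := by omega
    have hfac : ∀ p, p.Prime → p ∣ (1 + k * q) → F.card < p := by
      intro p hp hdvd
      by_contra hle
      push_neg at hle
      have hpq : p ∣ q := hprimes p hp (by omega)
      have hpk : p ∣ k * q := hpq.mul_left k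
      have hp1 : p ∣ 1 := (Nat.dvd_add_right hpk).mp (by rwa [add_comm] at hdvd)
      have := Nat.le_of_dvd one_pos hp1
      have := hp.two_le
      omega
    have hper_r : Per ℓ (Ss A F (1 + k * q)) := part1 ℓ A F hF1 (1 + k * q) hr1 hfac
    have hmod : ℓ ∣ (1 + k * q) - 1 := by
      simpa using Dvd.dvd.mul_left hℓq k
    exact part2 ℓ A F hF1 (1 + k * q) hr1 hper_r hmod
  have hdilR : ∀ k : ℕ, ∀ x, (∑ f ∈ F, aR (x - (1 + k * q) • f)) = ∑ f ∈ F, aR (x - f) := by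
    intro k x
    rw [hcastr (1 + k * q) x, hcast1 x, hdil k x]
  refine ⟨fun f x => mean (fun k => aR (x - (1 + k * q) • f)), ?_, ?_⟩
  · intro f _hf x
    constructor
    · exact mean_mem_Icc fun k => haR01 _
    · set c : ℕ → ℝ := fun k => aR ((x + q • f) - (1 + k * q) • f) with hc
      have hshift : (fun k => aR (x - (1 + k * q) • f)) = (fun k => c (k + 1)) := by
        funext k
        rw [hc]
        congr 1
        have hsm : (1 + (k + 1) * q) • f = (1 + k * q) • f + q • f := by
          have : 1 + (k + 1) * q = (1 + k * q) + q := by ring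
          rw [this, add_smul]
        rw [hsm]
        abel
      show mean (fun k => aR ((x + q • f) - (1 + k * q) • f))
          = mean (fun k => aR (x - (1 + k * q) • f))
      rw [hshift]
      exact (mean_shift (hBddaR _)).symm
  · intro x
    have hsum : (∑ f ∈ F.erase 0, mean (fun k => aR (x - (1 + k * q) • f)))
        = mean (fun k => ∑ f ∈ F.erase 0, aR (x - (1 + k * q) • f)) :=
      (mean_finset_sum _ _ fun f _ => hBddaR _).symm
    have hinner : ∀ k : ℕ, (∑ f ∈ F.erase 0, aR (x - (1 + k * q) • f))
        = (∑ f ∈ F, aR (x - f)) - aR x := by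
      intro k
      have h1 := Finset.add_sum_erase F (fun f => aR (x - (1 + k * q) • f)) h0
      simp only [smul_zero, sub_zero] at h1
      rw [hdilR k x] at h1
      linarith
    have hconst : mean (fun k => ∑ f ∈ F.erase 0, aR (x - (1 + k * q) • f))
        = (∑ f ∈ F, aR (x - f)) - aR x := by
      have : (fun k => ∑ f ∈ F.erase 0, aR (x - (1 + k * q) • f))
          = (fun _ => (∑ f ∈ F, aR (x - f)) - aR x) := funext hinner
      rw [this, mean_const]
    rw [hsum, hconst]
    ring
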